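/- The sum of the reciprocals of the square roots of the first n natural numbers satisfies ∑_{i=1}^{n} 1/√i = 2√n + ζ(1/2) + o(1) as n → ∞; precisely, the sequence n ↦ ∑_{i=1}^{n} 1/√i − 2·n^{1/2} converges to ζ(1/2). -/

import Mathlib

open Complex Filter Finset Set

noncomputable def Ff (n : ℕ) (s : ℂ) : ℂ :=
  (n : ℂ) ^ (-s) - (((n : ℂ) + 1) ^ (1 - s) - (n : ℂ) ^ (1 - s)) / (1 - s)

lemma norm_Ff_le {n : ℕ} (hn : 1 ≤ n) {s : ℂ} (hs : 0 < s.re) (hs1 : s ≠ 1) :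
    ‖Ff n s‖ ≤ ‖s‖ * (n : ℝ) ^ (-s.re - 1) := by
  have hn0 : (0:ℝ) < n := by exact_mod_cast hn
  have hs0 : s ≠ 0 := fun h => by simp [h] at hs
  set C : ℝ := ‖s‖ * (n : ℝ) ^ (-s.re - 1) with hC
  have hC0 : 0 ≤ C := mul_nonneg (norm_nonneg _) (Real.rpow_nonneg hn0.le _)
  set I : Set ℝ := Set.Icc (n : ℝ) ((n : ℝ) + 1) with hI
  have hIpos : ∀ x ∈ I, (0:ℝ) < x := fun x hx => lt_of_lt_of_le hn0 hx.1
  set d : ℝ → ℂ := fun x => (x : ℂ) ^ (-s) with hd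
  -- derivative of d
  have hdD : ∀ x ∈ I, HasDerivWithinAt d (-s * (x : ℂ) ^ (-s - 1)) I x := by
    intro x hx
    have hx0 : x ≠ 0 := (hIpos x hx).ne'
    have h1 : HasDerivAt (fun y : ℝ => (y : ℂ) ^ (-s - 1 + 1) / (-s - 1 + 1))
        ((x : ℂ) ^ (-s - 1)) x := hasDerivAt_ofReal_cpow_const' hx0 (by
          intro h
          exact hs0 (by linear_combination -h))
    have h2 := h1.const_mul (-s)
    have he : (fun y : ℝ => -s * ((y : ℂ) ^ (-s - 1 + 1) / (-s - 1 + 1))) = d := by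
      funext y
      have h3 : -s - 1 + 1 = -s := by ring
      rw [h3, hd]
      field_simp
    rw [he] at h2
    exact h2.hasDerivWithinAt
  have hdB : ∀ x ∈ I, ‖-s * (x : ℂ) ^ (-s - 1)‖ ≤ C := by
    intro x hx
    have hx0 : (0:ℝ) < x := hIpos x hx
    rw [norm_mul, norm_neg, hC]
    gcongr
    rw [Complex.norm_cpow_eq_rpow_re_of_pos hx0]
    simp only [Complex.sub_re, Complex.neg_re, Complex.one_re]
    exact Real.rpow_le_rpow_of_nonpos hn0 hx.1 (by linarith)
  have hdiff : ∀ x ∈ I, ‖d x - d (n : ℝ)‖ ≤ C :=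
    fun x hx => by
      calc ‖d x - d (n:ℝ)‖ ≤ C * ‖x - (n:ℝ)‖ :=
            (convex_Icc _ _).norm_image_sub_le_of_norm_hasDerivWithin_le hdD hdB
              (Set.left_mem_Icc.2 (by linarith)) hx
        _ ≤ C * 1 := by
            gcongr
            rw [Real.norm_eq_abs, _root_.abs_of_nonneg (by linarith [hx.1])]
            linarith [hx.2]
        _ = C := mul_one C
  -- the antiderivative minus linear part
  set φ : ℝ → ℂ := fun x => (x : ℂ) ^ (1 - s) / (1 - s) - d (n : ℝ) * x with hφ
  have hφD : ∀ x ∈ I, HasDerivWithinAt φ (d x - d (n : ℝ)) I x := by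
    intro x hx
    have hx0 : x ≠ 0 := (hIpos x hx).ne'
    have h1 : HasDerivAt (fun y : ℝ => (y : ℂ) ^ (-s + 1) / (-s + 1))
        ((x : ℂ) ^ (-s)) x := hasDerivAt_ofReal_cpow_const' hx0 (by
          intro h
          exact hs1 (by linear_combination -h))
    have h2 : HasDerivAt (fun y : ℝ => d (n:ℝ) * (y : ℂ)) (d (n:ℝ)) x := by
      simpa using (Complex.ofRealCLM.hasDerivAt (x := x)).const_mul (d (n:ℝ))
    have h3 := h1.sub h2
    have he : (fun y : ℝ => (y : ℂ) ^ (-s + 1) / (-s + 1) - d (n:ℝ) * (y:ℂ)) = φ := by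
      funext y
      have h4 : -s + 1 = 1 - s := by ring
      rw [h4, hφ]
    rw [← he]
    exact h3.hasDerivWithinAt
  have key : ‖φ ((n:ℝ) + 1) - φ (n:ℝ)‖ ≤ C * ‖((n:ℝ) + 1) - (n:ℝ)‖ :=
    (convex_Icc _ _).norm_image_sub_le_of_norm_hasDerivWithin_le hφD hdiff
      (Set.left_mem_Icc.2 (by linarith)) (Set.right_mem_Icc.2 (by linarith))
  have hsimp : ‖((n:ℝ) + 1) - (n:ℝ)‖ = 1 := by norm_num
  rw [hsimp, mul_one] at key
  have hval : φ ((n:ℝ) + 1) - φ (n:ℝ) = -Ff n s := by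
    rw [hφ, hd, Ff]
    have h1s : (1:ℂ) - s ≠ 0 := fun h => hs1 (by linear_combination -h)
    push_cast
    field_simp
    ring
  rw [hval, norm_neg] at key
  exact key

lemma summable_aux (p : ℝ) (hp : p < -1) : Summable (fun n : ℕ => ((n : ℝ) + 1) ^ p) := by
  have h := (Real.summable_nat_rpow (p := p)).2 hp
  have h2 := h.comp_injective (add_left_injective 1)
  have : (fun n : ℕ => ((n : ℝ) + 1) ^ p) = ((fun n : ℕ => (n:ℝ) ^ p) ∘ fun x => x + 1) := by
    funext n; simp [Function.comp]
  rw [this]; exact h2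


noncomputable def gg (s : ℂ) : ℂ := ∑' n : ℕ, Ff (n + 1) s

lemma norm_Ff_le' (n : ℕ) {s : ℂ} (hs : 0 < s.re) (hs1 : s ≠ 1) :
    ‖Ff (n + 1) s‖ ≤ ‖s‖ * ((n : ℝ) + 1) ^ (-s.re - 1) := by
  have := norm_Ff_le (n := n + 1) (Nat.le_add_left 1 n) hs hs1
  simpa using this

lemma summable_Ff {s : ℂ} (hs : 0 < s.re) (hs1 : s ≠ 1) :
    Summable (fun n : ℕ => Ff (n + 1) s) := by
  refine Summable.of_norm (Summable.of_nonneg_of_le (fun n => norm_nonneg _)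
    (fun n => norm_Ff_le' n hs hs1) ((summable_aux _ (by linarith)).mul_left ‖s‖))

lemma gg_differentiableAt {s₀ : ℂ} (h0 : 0 < s₀.re) (h1 : s₀ ≠ 1) :
    DifferentiableAt ℂ gg s₀ := by
  set ε : ℝ := min (min (s₀.re / 2) (dist s₀ 1 / 2)) 1 with hε
  have hd1 : 0 < dist s₀ 1 := dist_pos.2 h1
  have hε0 : 0 < ε := by positivity
  set B : Set ℂ := Metric.ball s₀ ε with hB
  have hre : ∀ s ∈ B, s₀.re / 2 < s.re := by
    intro s hs
    have h2 : |(s - s₀).re| ≤ ‖s - s₀‖ := by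
      exact Complex.abs_re_le_norm _
    rw [Complex.sub_re] at h2
    have h3 : ‖s - s₀‖ < ε := by have hs := Metric.mem_ball.1 hs; simpa [dist_eq_norm] using hs
    have h4 : ε ≤ s₀.re / 2 := (min_le_left _ _).trans (min_le_left _ _)
    cases abs_le.1 h2 with
    | intro a b => linarith
  have hne : ∀ s ∈ B, s ≠ 1 := by
    intro s hs h
    rw [h] at hs
    have h3 : dist (1:ℂ) s₀ < ε := hs
    have h4 : ε ≤ dist s₀ 1 / 2 := (min_le_left _ _).trans (min_le_right _ _)
    rw [dist_comm] at h3
    linarith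
  have hnorm : ∀ s ∈ B, ‖s‖ ≤ ‖s₀‖ + 1 := by
    intro s hs
    have h3 : ‖s - s₀‖ < ε := by have hs := Metric.mem_ball.1 hs; simpa [dist_eq_norm] using hs
    have h4 : ε ≤ 1 := min_le_right _ _
    have := norm_sub_norm_le s s₀
    linarith
  have hdiff : DifferentiableOn ℂ (fun s => ∑' n : ℕ, Ff (n + 1) s) B := by
    refine differentiableOn_tsum_of_summable_norm
      (u := fun n : ℕ => (‖s₀‖ + 1) * ((n : ℝ) + 1) ^ (-(s₀.re / 2) - 1))
      (((summable_aux _ (by linarith))).mul_left _) (fun n => ?_) Metric.isOpen_ball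
      (fun n s hs => ?_)
    · intro s hs
      have hs1 : s ≠ 1 := hne s hs
      have h1s : (1:ℂ) - s ≠ 0 := fun h => hs1 (by linear_combination -h)
      have hn0 : ((n:ℂ) + 1) ≠ 0 := by
        have := (Nat.cast_ne_zero (R := ℂ) (n := n + 1)).2 (by omega)
        push_cast at this; exact this
      have hn0' : ((n:ℂ) + 1 + 1) ≠ 0 := by
        intro h
        have h2 : ((n + 2 : ℕ) : ℂ) = 0 := by push_cast; linear_combination h
        exact (Nat.cast_ne_zero.2 (by omega)) h2
      apply DifferentiableAt.differentiableWithinAt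
      unfold Ff
      push_cast
      apply DifferentiableAt.sub
      · exact (differentiableAt_id.neg).const_cpow (Or.inl hn0)
      · apply DifferentiableAt.div
        · apply DifferentiableAt.sub <;>
            exact ((differentiableAt_const _).sub differentiableAt_id).const_cpow
              (Or.inl (by assumption))
        · exact (differentiableAt_const _).sub differentiableAt_id
        · exact h1s
    · have hb := norm_Ff_le' n (lt_trans (by linarith) (hre s hs)) (hne s hs)
      refine hb.trans ?_
      have h2 : ((n:ℝ) + 1) ^ (-s.re - 1) ≤ ((n : ℝ) + 1) ^ (-(s₀.re / 2) - 1) := by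
        apply Real.rpow_le_rpow_of_exponent_le (by push_cast; linarith)
        have := hre s hs
        linarith
      have h3 := Real.rpow_nonneg (by positivity : (0:ℝ) ≤ (n:ℝ)+1) (-s.re - 1)
      calc ‖s‖ * ((n:ℝ)+1) ^ (-s.re - 1) ≤ (‖s₀‖+1) * ((n:ℝ)+1) ^ (-s.re - 1) :=
            mul_le_mul_of_nonneg_right (hnorm s hs) h3
        _ ≤ (‖s₀‖+1) * ((n:ℝ)+1) ^ (-(s₀.re/2) - 1) :=
            mul_le_mul_of_nonneg_left h2 (by positivity)
  exact (hdiff.differentiableAt (Metric.ball_mem_nhds _ hε0))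

lemma gg_eq {s : ℂ} (hs : 1 < s.re) : gg s = riemannZeta s - 1 / (s - 1) := by
  have hs0 : 0 < s.re := by linarith
  have hs1 : s ≠ 1 := fun h => by rw [h] at hs; simp at hs
  have h1s : (1:ℂ) - s ≠ 0 := fun h => hs1 (by linear_combination -h)
  set A : ℕ → ℂ := fun n => ((n:ℂ) + 1) ^ (-s) with hA'
  set T : ℕ → ℂ := fun n => ((n:ℂ) + 2) ^ (1 - s) - ((n:ℂ) + 1) ^ (1 - s) with hT'
  have hcast : ∀ n : ℕ, ((n:ℝ) + 1 : ℝ) = (((n + 1 : ℕ) : ℝ)) := by intro n; push_cast; ring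
  have hnormA : ∀ n : ℕ, ‖A n‖ = ((n:ℝ) + 1) ^ (-s.re) := by
    intro n
    have hb : ((n:ℂ) + 1) = ((((n:ℝ) + 1 : ℝ)):ℂ) := by push_cast; ring
    simp only [hA']
    rw [hb, Complex.norm_cpow_eq_rpow_re_of_pos (by positivity)]
    simp
  have hA : Summable A := by
    apply Summable.of_norm
    simp_rw [hnormA]
    exact summable_aux _ (by linarith)
  have hFfs := summable_Ff hs0 hs1
  have hFT : ∀ n : ℕ, Ff (n + 1) s = A n - T n / (1 - s) := by
    intro n
    rw [Ff, hA', hT']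
    push_cast
    ring_nf
  have hT : Summable T := by
    have h := (hA.sub hFfs).mul_left (1 - s)
    refine h.congr fun n => ?_
    rw [hFT n]
    field_simp
    ring
  -- telescoping
  have htel : ∀ N : ℕ, ∑ n ∈ range N, T n = ((N:ℂ) + 1) ^ (1 - s) - 1 := by
    intro N
    have h := Finset.sum_range_sub (f := fun k : ℕ => ((k:ℂ) + 1) ^ (1 - s)) N
    calc ∑ n ∈ range N, T n
        = ∑ i ∈ range N, ((((i+1:ℕ):ℂ) + 1) ^ (1 - s) - (((i:ℕ):ℂ) + 1) ^ (1 - s)) := by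
          apply Finset.sum_congr rfl
          intro n _
          rw [hT']
          push_cast
          ring_nf
      _ = (((N:ℕ):ℂ) + 1) ^ (1 - s) - (((0:ℕ):ℂ) + 1) ^ (1 - s) := h
      _ = ((N:ℂ) + 1) ^ (1 - s) - 1 := by norm_num
  have hlim : Tendsto (fun N : ℕ => ((N:ℂ) + 1) ^ (1 - s)) atTop (nhds 0) := by
    rw [tendsto_zero_iff_norm_tendsto_zero]
    have hnorm : ∀ N : ℕ, ‖((N:ℂ) + 1) ^ (1 - s)‖ = ((N:ℝ) + 1) ^ (1 - s.re) := by
      intro N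
      have hb : ((N:ℂ) + 1) = ((((N:ℝ) + 1 : ℝ)):ℂ) := by push_cast; ring
      rw [hb, Complex.norm_cpow_eq_rpow_re_of_pos (by positivity)]
      simp
    simp_rw [hnorm]
    have h2 : Tendsto (fun N : ℕ => ((N:ℝ) + 1)) atTop atTop :=
      tendsto_atTop_add_const_right _ 1 tendsto_natCast_atTop_atTop
    have h3 : Tendsto (fun x : ℝ => x ^ (-(s.re - 1))) atTop (nhds 0) :=
      tendsto_rpow_neg_atTop (by linarith)
    have h4 := h3.comp h2
    refine h4.congr fun N => ?_
    simp only [Function.comp]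
    congr 1
    ring
  have hTsum : ∑' n, T n = -1 := by
    have h1 := hT.hasSum.tendsto_sum_nat
    have h2 : Tendsto (fun N : ℕ => ∑ n ∈ range N, T n) atTop (nhds (0 - 1)) := by
      simp_rw [htel]
      exact hlim.sub_const 1
    have := tendsto_nhds_unique h1 h2
    rw [this]; norm_num
  have hZ : riemannZeta s = ∑' n : ℕ, A n := by
    rw [zeta_eq_tsum_one_div_nat_add_one_cpow hs]
    congr 1
    funext n
    simp only [hA']
    rw [cpow_neg, one_div]
  calc gg s = ∑' n, (A n - T n / (1 - s)) := by unfold gg; congr 1; funext n; exact hFT n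
    _ = (∑' n, A n) - (∑' n, T n) / (1 - s) := by
        rw [Summable.tsum_sub hA (hT.div_const _), tsum_div_const]
    _ = riemannZeta s - 1 / (s - 1) := by
        rw [hTsum, ← hZ]
        have hs1' : s - 1 ≠ 0 := sub_ne_zero.2 hs1
        congr 1
        field_simp
        ring

lemma U_preconnected : IsPreconnected {s : ℂ | 0 < s.re ∧ s ≠ 1} := by
  set U1 : Set ℂ := {s | 0 < s.re} ∩ {s | s.re < 1} with hU1
  set U2 : Set ℂ := {s | 1 < s.re} with hU2
  set U3 : Set ℂ := {s | 0 < s.re} ∩ {s | 0 < s.im} with hU3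
  set U4 : Set ℂ := {s | 0 < s.re} ∩ {s | s.im < 0} with hU4
  have hc1 : Convex ℝ U1 := (convex_halfSpace_re_gt 0).inter (convex_halfSpace_re_lt 1)
  have hc2 : Convex ℝ U2 := convex_halfSpace_re_gt 1
  have hc3 : Convex ℝ U3 := (convex_halfSpace_re_gt 0).inter (convex_halfSpace_im_gt 0)
  have hc4 : Convex ℝ U4 := (convex_halfSpace_re_gt 0).inter (convex_halfSpace_im_lt 0)
  have hx13 : (⟨1/2, 1/2⟩ : ℂ) ∈ U1 ∩ U3 := by
    constructor <;> constructor <;> norm_num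
  have hC1 : IsPreconnected (U1 ∪ U3) :=
    IsPreconnected.union _ hx13.1 hx13.2 hc1.isPreconnected hc3.isPreconnected
  have hx23 : (⟨2, 1⟩ : ℂ) ∈ (U1 ∪ U3) ∩ U2 := by
    constructor
    · right; constructor <;> norm_num
    · norm_num [hU2]
  have hC2 : IsPreconnected ((U1 ∪ U3) ∪ U2) :=
    IsPreconnected.union _ hx23.1 hx23.2 hC1 hc2.isPreconnected
  have hx14 : (⟨1/2, -(1/2)⟩ : ℂ) ∈ ((U1 ∪ U3) ∪ U2) ∩ U4 := by
    constructor
    · left; left; constructor <;> norm_num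
    · constructor <;> norm_num
  have hC3 : IsPreconnected (((U1 ∪ U3) ∪ U2) ∪ U4) :=
    IsPreconnected.union _ hx14.1 hx14.2 hC2 hc4.isPreconnected
  have hU : {s : ℂ | 0 < s.re ∧ s ≠ 1} = ((U1 ∪ U3) ∪ U2) ∪ U4 := by
    ext s
    simp only [mem_setOf_eq, Set.mem_union, mem_inter_iff, hU1, hU2, hU3, hU4, mem_setOf_eq]
    constructor
    · rintro ⟨h0, h1⟩
      rcases lt_trichotomy s.im 0 with him | him | him
      · right; exact ⟨h0, him⟩
      · have hre : s.re ≠ 1 := by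
          intro h
          exact h1 (Complex.ext h him)
        rcases lt_or_gt_of_ne hre with h | h
        · left; left; left; exact ⟨h0, h⟩
        · left; right; exact h
      · left; left; right; exact ⟨h0, him⟩
    · rintro (((⟨h0, h⟩ | ⟨h0, h⟩) | h) | ⟨h0, h⟩)
      · exact ⟨h0, fun he => by rw [he] at h; simp at h⟩
      · exact ⟨h0, fun he => by rw [he] at h; simp at h⟩
      · exact ⟨by linarith, fun he => by rw [he] at h; simp at h⟩
      · exact ⟨h0, fun he => by rw [he] at h; simp at h⟩
  rw [hU]
  exact hC3

lemma gg_half : gg (1/2 : ℂ) = riemannZeta (1/2) + 2 := by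
  set U : Set ℂ := {s | 0 < s.re ∧ s ≠ 1} with hUdef
  have hUo : IsOpen U := by
    have : U = (Complex.re ⁻¹' Ioi 0) ∩ {(1:ℂ)}ᶜ := rfl
    rw [this]
    exact (Complex.continuous_re.isOpen_preimage _ isOpen_Ioi).inter isOpen_compl_singleton
  have hg : AnalyticOnNhd ℂ gg U :=
    DifferentiableOn.analyticOnNhd
      (fun s hs => (gg_differentiableAt hs.1 hs.2).differentiableWithinAt) hUo
  have hz : AnalyticOnNhd ℂ (fun s => riemannZeta s - 1 / (s - 1)) U := by
    refine DifferentiableOn.analyticOnNhd (fun s hs => ?_) hUo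
    refine ((differentiableAt_riemannZeta hs.2).sub ?_).differentiableWithinAt
    exact (differentiableAt_const _).div (differentiableAt_id.sub_const 1)
      (sub_ne_zero.2 hs.2)
  have h2U : (2:ℂ) ∈ U := by
    constructor <;> norm_num [hUdef]
  have hhalfU : (1/2 : ℂ) ∈ U := by
    constructor
    · norm_num [hUdef]
    · norm_num [hUdef]
  have heq : gg =ᶠ[nhds 2] fun s => riemannZeta s - 1 / (s - 1) := by
    have hV : {z : ℂ | 1 < z.re} ∈ nhds (2:ℂ) :=
      (Complex.continuous_re.isOpen_preimage _ isOpen_Ioi).mem_nhds (by norm_num)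
    filter_upwards [hV] with z hz using gg_eq hz
  have := hg.eqOn_of_preconnected_of_eventuallyEq hz U_preconnected h2U heq hhalfU
  rw [this]
  have : (1/2 : ℂ) - 1 = -(1/2) := by norm_num
  beta_reduce
  rw [this]
  norm_num

lemma Ff_half (n : ℕ) :
    Ff (n + 1) (1/2 : ℂ) = (((1 / Real.sqrt ((n:ℝ) + 1)
      - (2 * Real.sqrt ((n:ℝ) + 2) - 2 * Real.sqrt ((n:ℝ) + 1))) : ℝ) : ℂ) := by
  have hx1 : (0:ℝ) ≤ (n:ℝ) + 1 := by positivity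
  have hx2 : (0:ℝ) ≤ (n:ℝ) + 2 := by positivity
  have hb1 : ((n + 1 : ℕ) : ℂ) = ((((n:ℝ) + 1 : ℝ)) : ℂ) := by push_cast; ring
  have hb2 : ((((n:ℝ) + 1 : ℝ)) : ℂ) + 1 = ((((n:ℝ) + 2 : ℝ)) : ℂ) := by push_cast; ring
  have he1 : -(1/2 : ℂ) = ((-(1/2) : ℝ) : ℂ) := by norm_num
  have he2 : (1 : ℂ) - 1/2 = (((1/2) : ℝ) : ℂ) := by norm_num
  unfold Ff
  rw [hb1, hb2, he1, he2, ← Complex.ofReal_cpow hx1, ← Complex.ofReal_cpow hx2,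
    ← Complex.ofReal_cpow hx1]
  have hr1 : ((n:ℝ) + 1) ^ (-(1/2) : ℝ) = 1 / Real.sqrt ((n:ℝ) + 1) := by
    rw [Real.rpow_neg hx1, Real.sqrt_eq_rpow, one_div, one_div]
  have hr2 : ((n:ℝ) + 2) ^ ((1/2) : ℝ) = Real.sqrt ((n:ℝ) + 2) := by
    rw [Real.sqrt_eq_rpow]
  have hr3 : ((n:ℝ) + 1) ^ ((1/2) : ℝ) = Real.sqrt ((n:ℝ) + 1) := by
    rw [Real.sqrt_eq_rpow]
  rw [hr1, hr2, hr3]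
  push_cast
  field_simp

lemma sqrt_diff_tendsto :
    Tendsto (fun N : ℕ => Real.sqrt ((N:ℝ) + 1) - Real.sqrt (N:ℝ)) atTop (nhds 0) := by
  have hub : ∀ N : ℕ, Real.sqrt ((N:ℝ) + 1) - Real.sqrt (N:ℝ) ≤ 1 / Real.sqrt ((N:ℝ) + 1) := by
    intro N
    have h1 : (0:ℝ) < Real.sqrt ((N:ℝ) + 1) := Real.sqrt_pos.2 (by positivity)
    have h3 := Real.mul_self_sqrt (show (0:ℝ) ≤ (N:ℝ) + 1 by positivity)
    have h4 := Real.mul_self_sqrt (show (0:ℝ) ≤ (N:ℝ) from N.cast_nonneg)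
    have h5 : Real.sqrt (N:ℝ) * Real.sqrt (N:ℝ) ≤ Real.sqrt (N:ℝ) * Real.sqrt ((N:ℝ) + 1) :=
      mul_le_mul_of_nonneg_left (Real.sqrt_le_sqrt (by linarith)) (Real.sqrt_nonneg _)
    have key : (Real.sqrt ((N:ℝ) + 1) - Real.sqrt (N:ℝ)) * Real.sqrt ((N:ℝ) + 1) ≤ 1 := by
      nlinarith
    exact (le_div_iff₀ h1).2 key
  have hlb : ∀ N : ℕ, 0 ≤ Real.sqrt ((N:ℝ) + 1) - Real.sqrt (N:ℝ) :=
    fun N => sub_nonneg.2 (Real.sqrt_le_sqrt (by linarith))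
  have h2 : Tendsto (fun N : ℕ => Real.sqrt ((N:ℝ) + 1)) atTop atTop := by
    have h6 := (tendsto_rpow_atTop (show (0:ℝ) < 1/2 by norm_num)).comp
      (tendsto_atTop_add_const_right atTop (1:ℝ) tendsto_natCast_atTop_atTop)
    refine h6.congr fun N => ?_
    simp only [Function.comp]
    rw [← Real.sqrt_eq_rpow]
  have hupper : Tendsto (fun N : ℕ => 1 / Real.sqrt ((N:ℝ) + 1)) atTop (nhds 0) := by
    simp only [one_div]
    exact h2.inv_tendsto_atTop
  exact squeeze_zero hlb hub hupper

/-- Ramanujan's asymptotic expansion of the sum of reciprocal square roots: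
the sequence `n ↦ ∑_{i=1}^{n} 1/√i − 2·n^{1/2}` converges to `ζ(1/2)`. -/
theorem sum_inv_sqrt_asymptotic :
    Filter.Tendsto
      (fun n : ℕ =>
        (∑ i ∈ Finset.Icc 1 n, 1 / Real.sqrt (i : ℝ)) - 2 * (n : ℝ) ^ ((1 : ℝ) / 2))
      Filter.atTop (nhds (riemannZeta (1 / 2)).re) := by
  have hre : (1/2 : ℂ).re = 1/2 := by
    rw [show (1/2 : ℂ) = ((1/2 : ℝ) : ℂ) by norm_num, Complex.ofReal_re]
  have hne : (1/2 : ℂ) ≠ 1 := by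
    intro h
    rw [h] at hre
    norm_num at hre
  have hsum := summable_Ff (s := 1/2) (by rw [hre]; norm_num) hne
  have htend := hsum.hasSum.tendsto_sum_nat
  have htendre : Tendsto (fun N : ℕ => (∑ n ∈ range N, Ff (n + 1) (1/2 : ℂ)).re) atTop
      (nhds ((riemannZeta (1/2)).re + 2)) := by
    have h1 := (Complex.continuous_re.tendsto _).comp htend
    have h2 : (gg (1/2 : ℂ)).re = (riemannZeta (1/2)).re + 2 := by
      rw [gg_half, Complex.add_re]
      norm_num
    rw [← h2]
    exact h1
  have hS : ∀ N : ℕ, (∑ n ∈ range N, Ff (n + 1) (1/2 : ℂ)).re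
      = (∑ n ∈ range N, 1 / Real.sqrt ((n:ℝ) + 1)) - (2 * Real.sqrt ((N:ℝ) + 1) - 2) := by
    intro N
    rw [Complex.re_sum]
    have hc : ∀ n ∈ range N, (Ff (n + 1) (1/2 : ℂ)).re = 1 / Real.sqrt ((n:ℝ) + 1)
        - (2 * Real.sqrt ((n:ℝ) + 2) - 2 * Real.sqrt ((n:ℝ) + 1)) := by
      intro n _
      rw [Ff_half n, Complex.ofReal_re]
    rw [Finset.sum_congr rfl hc, Finset.sum_sub_distrib]
    congr 1
    have h := Finset.sum_range_sub (f := fun k : ℕ => 2 * Real.sqrt ((k:ℝ) + 1)) N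
    calc ∑ n ∈ range N, (2 * Real.sqrt ((n:ℝ) + 2) - 2 * Real.sqrt ((n:ℝ) + 1))
        = ∑ n ∈ range N, (2 * Real.sqrt (((n+1:ℕ):ℝ) + 1) - 2 * Real.sqrt ((n:ℝ) + 1)) := by
          apply Finset.sum_congr rfl
          intro n _
          push_cast
          ring_nf
      _ = 2 * Real.sqrt (((N:ℕ):ℝ) + 1) - 2 * Real.sqrt (((0:ℕ):ℝ) + 1) := h
      _ = 2 * Real.sqrt ((N:ℝ) + 1) - 2 := by norm_num
  have hIcc : ∀ N : ℕ, ∑ i ∈ Finset.Icc 1 N, 1 / Real.sqrt (i:ℝ)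
      = ∑ n ∈ range N, 1 / Real.sqrt ((n:ℝ) + 1) := by
    intro N
    rw [← Finset.Ico_add_one_right_eq_Icc, Finset.sum_Ico_eq_sum_range]
    apply Finset.sum_congr rfl
    intro n _
    push_cast
    ring_nf
  have hfun : ∀ N : ℕ, (∑ i ∈ Finset.Icc 1 N, 1 / Real.sqrt (i:ℝ)) - 2 * (N:ℝ) ^ ((1:ℝ)/2)
      = ((∑ n ∈ range N, Ff (n + 1) (1/2 : ℂ)).re - 2)
        + 2 * (Real.sqrt ((N:ℝ) + 1) - Real.sqrt (N:ℝ)) := by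
    intro N
    rw [hIcc N, hS N, ← Real.sqrt_eq_rpow]
    ring
  have hlim : Tendsto (fun N : ℕ =>
      ((∑ n ∈ range N, Ff (n + 1) (1/2 : ℂ)).re - 2)
        + 2 * (Real.sqrt ((N:ℝ) + 1) - Real.sqrt (N:ℝ))) atTop
      (nhds (((riemannZeta (1/2)).re + 2 - 2) + 2 * 0)) :=
    (htendre.sub_const 2).add (sqrt_diff_tendsto.const_mul 2)
  have : ((riemannZeta (1/2)).re + 2 - 2) + 2 * 0 = (riemannZeta (1/2 : ℂ)).re := by ring
  rw [this] at hlim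
  exact hlim.congr fun N => (hfun N).symm
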